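/- Apartness is stable under substitution: for first-order terms, if two lists of terms σ̄ and τ̄ have no unifier (they are 'apart'), then for every substitution θ, the lists σ̄ and τ̄[θ] also have no unifier, provided the free variables of σ̄ and τ̄ are disjoint. -/

import Mathlib

inductive Tm where
  | var : ℕ → Tm
  | app : ℕ → List Tm → Tm
deriving Repr

def Tm.subst (θ : ℕ → Tm) : Tm → Tm
  | .var n => θ n
  | .app f args => .app f (args.attach.map fun x => Tm.subst θ x.1)
decreasing_by
  have := List.sizeOf_lt_of_mem x.2
  simp only [Tm.app.sizeOf_spec]
  omega

inductive Tm.FreeIn : ℕ → Tm → Prop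
  | var (n : ℕ) : Tm.FreeIn n (.var n)
  | app {n f t} {args : List Tm} : t ∈ args → Tm.FreeIn n t → Tm.FreeIn n (.app f args)

/-- `θ'` unifies the two lists of terms. -/
def Unifies (θ' : ℕ → Tm) (σs τs : List Tm) : Prop :=
  σs.map (Tm.subst θ') = τs.map (Tm.subst θ')


theorem Tm.subst_var (θ : ℕ → Tm) (n : ℕ) : Tm.subst θ (.var n) = θ n := by
  rw [Tm.subst]

theorem Tm.subst_app (θ : ℕ → Tm) (f : ℕ) (args : List Tm) :
    Tm.subst θ (.app f args) = .app f (args.map (Tm.subst θ)) := by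
  rw [Tm.subst]
  congr 1
  simp [List.map_attach_eq_pmap, List.pmap_eq_map]

theorem Tm.subst_congr (θ1 θ2 : ℕ → Tm) :
    ∀ t, (∀ n, Tm.FreeIn n t → θ1 n = θ2 n) → t.subst θ1 = t.subst θ2
  | .var n, h => by rw [Tm.subst_var, Tm.subst_var]; exact h n (.var n)
  | .app f args, h => by
    simp only [Tm.subst_app]
    congr 1
    refine List.map_congr_left fun x hx => ?_
    exact Tm.subst_congr θ1 θ2 x fun n hn => h n (.app hx hn)
decreasing_by
  have := List.sizeOf_lt_of_mem hx
  simp only [Tm.app.sizeOf_spec]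
  omega

theorem Tm.subst_comp (θ θ' : ℕ → Tm) :
    ∀ t : Tm, (t.subst θ).subst θ' = t.subst (fun n => (θ n).subst θ')
  | .var n => by rw [Tm.subst_var, Tm.subst_var]
  | .app f args => by
    simp only [Tm.subst_app, List.map_map]
    congr 1
    refine List.map_congr_left fun x hx => ?_
    exact Tm.subst_comp θ θ' x
decreasing_by
  have := List.sizeOf_lt_of_mem hx
  simp only [Tm.app.sizeOf_spec]
  omega

/-- Apartness is stable under substitution: if σ̄ and τ̄ (with disjoint free
variables) have no unifier, then σ̄ and τ̄[θ] have no unifier, for any θ. -/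
theorem apart_stable_under_subst (σs τs : List Tm)
    (hdisj : ∀ n, (∃ t ∈ σs, Tm.FreeIn n t) → ¬ ∃ t ∈ τs, Tm.FreeIn n t)
    (hapart : ¬ ∃ θ', Unifies θ' σs τs)
    (θ : ℕ → Tm) :
    ¬ ∃ θ', Unifies θ' σs (τs.map (Tm.subst θ)) := by
  rintro ⟨θ', hθ'⟩
  apply hapart
  classical
  refine ⟨fun n => if ∃ t ∈ σs, Tm.FreeIn n t then θ' n else (θ n).subst θ', ?_⟩
  unfold Unifies at hθ' ⊢
  have hl : σs.map (Tm.subst fun n => if ∃ t ∈ σs, Tm.FreeIn n t then θ' n else (θ n).subst θ') = σs.map (Tm.subst θ') := by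
    refine List.map_congr_left fun t ht => ?_
    refine Tm.subst_congr _ _ t fun n hn => ?_
    exact if_pos (⟨t, ht, hn⟩ : ∃ t ∈ σs, Tm.FreeIn n t)
  have hr : τs.map (Tm.subst fun n => if ∃ t ∈ σs, Tm.FreeIn n t then θ' n else (θ n).subst θ') = (τs.map (Tm.subst θ)).map (Tm.subst θ') := by
    rw [List.map_map]
    refine List.map_congr_left fun t ht => ?_
    rw [Function.comp_apply, Tm.subst_comp]
    refine Tm.subst_congr _ _ t fun n hn => ?_
    have : ¬ ∃ t ∈ σs, Tm.FreeIn n t := fun h => hdisj n h ⟨t, ht, hn⟩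
    exact if_neg this
  rw [hl, hr, hθ']
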